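/- Let (X, Y) be a random pair with X taking values in the closed unit ball of ℝ^d (so ‖X‖ ≤ 1 almost surely) and Y taking values in {−1, +1}. Let μ = E[Y·X] and assume ‖μ‖ > 0, and let λ_max be the maximum eigenvalue of E[X·Xᵀ]. For w in the closed unit ball U of ℝ^d, define the hinge-loss subgradient g(w) = −Y·X·𝟙[Y·⟨w, X⟩ < 1]. Let u* ∈ U be a minimizer over U of the expected hinge loss u ↦ E[max{0, 1 − Y·⟨u, X⟩}]. Then for every w ∈ U: (w − u*)ᵀ·E[g(w)·g(w)ᵀ]·(w − u*) ≤ (2·λ_max/‖μ‖)·⟨w − u*, E[g(w)]⟩. -/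

import Mathlib

open Matrix MeasureTheory

lemma quadform_le_lmax {d : ℕ} (A : Matrix (Fin d) (Fin d) ℝ) (hAH : A.IsHermitian) (lmax : ℝ)
    (hub : ∀ l : ℝ, (∃ v : Fin d → ℝ, v ≠ 0 ∧ A.mulVec v = l • v) → l ≤ lmax)
    (v : Fin d → ℝ) : v ⬝ᵥ A.mulVec v ≤ lmax * ∑ i, v i ^ 2 := by
  classical
  set b := hAH.eigenvectorBasis with hb
  set lam := hAH.eigenvalues with hlam
  set v' : EuclideanSpace ℝ (Fin d) := (WithLp.equiv 2 _).symm v with hv'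
  set c : Fin d → ℝ := fun i => b.repr v' i with hc
  have hlami : ∀ i, lam i ≤ lmax := by
    intro i
    refine hub (lam i) ⟨(WithLp.equiv 2 _) (b i), ?_, hAH.mulVec_eigenvectorBasis i⟩
    simpa using b.orthonormal.ne_zero i
  have hexp : ∑ i, c i • b i = v' := b.sum_repr v'
  have hci : ∀ i, inner ℝ (b i) v' = c i := fun i => (b.repr_apply_apply v' i).symm
  have hAv : A.mulVec v = ∑ i, (c i * lam i) • ((b i : EuclideanSpace ℝ (Fin d)) : Fin d → ℝ) := by
    have h1 : A.mulVec v = A.mulVecLin (∑ i, c i • (b i : EuclideanSpace ℝ (Fin d))) := by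
      have e : (∑ i, c i • ((b i : EuclideanSpace ℝ (Fin d)) : Fin d → ℝ)) = v := by
        rw [show v = WithLp.ofLp v' from rfl, ← hexp]; simp
      rw [e]; rfl
    rw [h1, map_sum]
    congr 1; funext i
    rw [_root_.map_smul]
    have := hAH.mulVec_eigenvectorBasis i
    show c i • A.mulVec ((b i : EuclideanSpace ℝ (Fin d)) : Fin d → ℝ) = _
    rw [show A.mulVec ((b i : EuclideanSpace ℝ (Fin d)) : Fin d → ℝ) = lam i • ((b i : EuclideanSpace ℝ (Fin d)) : Fin d → ℝ) from this]
    rw [smul_smul]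
  have hdot : ∀ x y : EuclideanSpace ℝ (Fin d), (x : Fin d → ℝ) ⬝ᵥ (y : Fin d → ℝ) = inner ℝ x y := by
    intro x y
    rw [PiLp.inner_apply]
    simp [dotProduct, RCLike.inner_apply, mul_comm]
  have key : v ⬝ᵥ A.mulVec v = ∑ i, lam i * c i ^ 2 := by
    rw [hAv]
    have h1 : v ⬝ᵥ (∑ i, (c i * lam i) • ((b i : EuclideanSpace ℝ (Fin d)) : Fin d → ℝ))
        = ∑ j, ∑ i, v j * ((c i * lam i) * (b i : EuclideanSpace ℝ (Fin d)) j) := by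
      simp [dotProduct, Finset.mul_sum]
    rw [h1, Finset.sum_comm]
    congr 1; funext i
    have h2 : ∑ j, v j * ((c i * lam i) * (b i : EuclideanSpace ℝ (Fin d)) j)
        = (c i * lam i) * ∑ j, v j * (b i : EuclideanSpace ℝ (Fin d)) j := by
      rw [Finset.mul_sum]; congr 1; funext j; ring
    rw [h2]
    have h3 : ∑ j, v j * (b i : EuclideanSpace ℝ (Fin d)) j = inner ℝ v' (b i) := hdot v' (b i)
    rw [h3, real_inner_comm, hci i]
    ring
  have hnorm : ∑ i, v i ^ 2 = ∑ i, c i ^ 2 := by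
    have h1 : (v : Fin d → ℝ) ⬝ᵥ v = inner ℝ v' v' := hdot v' v'
    have h2 : (inner ℝ v' v' : ℝ) = inner ℝ (b.repr v') (b.repr v') := (b.repr.inner_map_map v' v').symm
    have h3 : (inner ℝ (b.repr v') (b.repr v') : ℝ) = ∑ i, c i * c i := by
      rw [PiLp.inner_apply]; simp [RCLike.inner_apply, hc, sq]
    simp only [dotProduct] at h1
    rw [h2, h3] at h1
    calc ∑ i, v i ^ 2 = ∑ i, v i * v i := by simp [sq]
    _ = ∑ i, c i * c i := h1
    _ = ∑ i, c i ^ 2 := by simp [sq]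
  rw [key, hnorm, Finset.mul_sum]
  exact Finset.sum_le_sum fun i _ => mul_le_mul_of_nonneg_right (hlami i) (sq_nonneg _)

lemma dot_integral {d : ℕ} {Ω : Type*} [MeasurableSpace Ω] (P : Measure Ω)
    (v : Fin d → ℝ) (f : Ω → Fin d → ℝ) (hf : Integrable f P) :
    v ⬝ᵥ (∫ ω, f ω ∂P) = ∫ ω, v ⬝ᵥ f ω ∂P := by
  have hco : ∀ i, (∫ ω, f ω ∂P) i = ∫ ω, f ω i ∂P := fun i =>
    ((ContinuousLinearMap.proj (R := ℝ) (φ := fun _ : Fin d => ℝ) i).integral_comp_comm hf).symm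
  have hci : ∀ i : Fin d, Integrable (fun ω => f ω i) P := fun i =>
    (ContinuousLinearMap.proj (R := ℝ) (φ := fun _ : Fin d => ℝ) i).integrable_comp hf
  simp only [dotProduct, hco]
  rw [show (∫ ω, ∑ i, v i * f ω i ∂P) = ∑ i, ∫ ω, v i * f ω i ∂P from
    integral_finset_sum _ (fun i _ => (hci i).const_mul (v i))]
  exact Finset.sum_congr rfl fun i _ => (integral_const_mul (v i) _).symm

lemma quad_integral {d : ℕ} {Ω : Type*} [MeasurableSpace Ω] (P : Measure Ω)
    (v : Fin d → ℝ) (f : Ω → Fin d → ℝ)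
    (hij : ∀ i j : Fin d, Integrable (fun ω => f ω i * f ω j) P) :
    v ⬝ᵥ (Matrix.of fun i j => ∫ ω, f ω i * f ω j ∂P).mulVec v = ∫ ω, (v ⬝ᵥ f ω) ^ 2 ∂P := by
  have hterm : ∀ i j : Fin d, Integrable (fun ω => (v i * f ω i) * (v j * f ω j)) P := by
    intro i j
    have := (hij i j).const_mul (v i * v j)
    exact this.congr (Filter.Eventually.of_forall fun ω => by ring)
  have hpt : ∀ ω, (v ⬝ᵥ f ω) ^ 2 = ∑ i, ∑ j, (v i * f ω i) * (v j * f ω j) := by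
    intro ω
    rw [sq, dotProduct, Finset.sum_mul_sum]
  calc v ⬝ᵥ (Matrix.of fun i j => ∫ ω, f ω i * f ω j ∂P).mulVec v
      = ∑ i, ∑ j, v i * ((∫ ω, f ω i * f ω j ∂P) * v j) := by
        simp [dotProduct, Matrix.mulVec, Finset.mul_sum]
    _ = ∑ i, ∑ j, ∫ ω, (v i * f ω i) * (v j * f ω j) ∂P := by
        refine Finset.sum_congr rfl fun i _ => Finset.sum_congr rfl fun j _ => ?_
        rw [show (fun ω => (v i * f ω i) * (v j * f ω j)) = fun ω => (v i * v j) * (f ω i * f ω j)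
          from funext fun ω => by ring]
        rw [integral_const_mul]; ring
    _ = ∫ ω, ∑ i, ∑ j, (v i * f ω i) * (v j * f ω j) ∂P := by
        rw [integral_finset_sum _ (fun i _ => integrable_finset_sum _ (fun j _ => hterm i j))]
        exact Finset.sum_congr rfl fun i _ =>
          (integral_finset_sum _ (fun j _ => hterm i j)).symm
    _ = ∫ ω, (v ⬝ᵥ f ω) ^ 2 ∂P := integral_congr_ae (Filter.Eventually.of_forall fun ω => (hpt ω).symm)

set_option maxHeartbeats 2000000 in
theorem stmt_4 {d : ℕ} (hd : 1 ≤ d) {Ω : Type*} [MeasurableSpace Ω]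
    (P : Measure Ω) [IsProbabilityMeasure P]
    (X : Ω → Fin d → ℝ) (Y : Ω → ℝ)
    (hXmeas : Measurable X) (hYmeas : Measurable Y)
    (hXball : ∀ᵐ ω ∂P, Real.sqrt (∑ i, (X ω i) ^ 2) ≤ 1)
    (hYsign : ∀ ω, Y ω = 1 ∨ Y ω = -1)
    -- the unit ball
    (U : Set (Fin d → ℝ)) (hU : U = {x | Real.sqrt (∑ i, (x i) ^ 2) ≤ 1})
    -- μ = E[Y·X] with ‖μ‖ > 0
    (μv : Fin d → ℝ) (hμv : μv = ∫ ω, Y ω • X ω ∂P)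
    (hμpos : 0 < Real.sqrt (∑ i, (μv i) ^ 2))
    -- λ_max is the maximum eigenvalue of E[X·Xᵀ]
    (A : Matrix (Fin d) (Fin d) ℝ) (hA : A = Matrix.of fun i j => ∫ ω, X ω i * X ω j ∂P)
    (lmax : ℝ)
    (hlmax : IsGreatest {l : ℝ | ∃ v : Fin d → ℝ, v ≠ 0 ∧ A.mulVec v = l • v} lmax)
    -- the hinge-loss subgradient g(w) = −Y·X·𝟙[Y⟨w,X⟩ < 1]
    (g : (Fin d → ℝ) → Ω → Fin d → ℝ)
    (hg : ∀ w ω, g w ω = if Y ω * (w ⬝ᵥ X ω) < 1 then (-(Y ω)) • X ω else 0)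
    -- u* minimizes the expected hinge loss over U
    (ustar : Fin d → ℝ) (hustar : ustar ∈ U)
    (hmin : ∀ u ∈ U,
      ∫ ω, max 0 (1 - Y ω * (ustar ⬝ᵥ X ω)) ∂P ≤ ∫ ω, max 0 (1 - Y ω * (u ⬝ᵥ X ω)) ∂P) :
    ∀ w ∈ U,
      (w - ustar) ⬝ᵥ
          (Matrix.of fun i j => ∫ ω, g w ω i * g w ω j ∂P).mulVec (w - ustar) ≤
        (2 * lmax / Real.sqrt (∑ i, (μv i) ^ 2)) * ((w - ustar) ⬝ᵥ ∫ ω, g w ω ∂P) := by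
  classical
  intro w hw
  set m := Real.sqrt (∑ i, μv i ^ 2) with hm
  have hm0 : 0 < m := hμpos
  have hball : ∀ x : Fin d → ℝ, x ∈ U → ∑ i, x i ^ 2 ≤ 1 := by
    intro x hx
    rw [hU] at hx
    have h0 : (0:ℝ) ≤ ∑ i, x i ^ 2 := Finset.sum_nonneg fun i _ => sq_nonneg _
    nlinarith [Real.sq_sqrt h0, Real.sqrt_nonneg (∑ i, x i ^ 2), Set.mem_setOf_eq ▸ hx]
  have hw1 : ∑ i, w i ^ 2 ≤ 1 := hball w hw
  have hu1 : ∑ i, ustar i ^ 2 ≤ 1 := hball ustar hustar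
  have hX1 : ∀ᵐ ω ∂P, ∑ i, X ω i ^ 2 ≤ 1 := by
    filter_upwards [hXball] with ω hω
    have h0 : (0:ℝ) ≤ ∑ i, X ω i ^ 2 := Finset.sum_nonneg fun i _ => sq_nonneg _
    nlinarith [Real.sq_sqrt h0, Real.sqrt_nonneg (∑ i, X ω i ^ 2)]
  have hm2 : ∑ i, μv i ^ 2 = m ^ 2 := by
    rw [hm]
    exact (Real.sq_sqrt (Finset.sum_nonneg fun i _ => sq_nonneg _)).symm
  -- Cauchy–Schwarz, pointwise
  have hCS : ∀ (u : Fin d → ℝ) (ω : Ω), ∑ i, X ω i ^ 2 ≤ 1 →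
      (u ⬝ᵥ X ω) ^ 2 ≤ ∑ i, u i ^ 2 := by
    intro u ω hω
    have h1 := Finset.sum_mul_sq_le_sq_mul_sq Finset.univ u (X ω)
    have h0 : (0:ℝ) ≤ ∑ i, u i ^ 2 := Finset.sum_nonneg fun i _ => sq_nonneg _
    calc (u ⬝ᵥ X ω) ^ 2 = (∑ i, u i * X ω i) ^ 2 := rfl
    _ ≤ (∑ i, u i ^ 2) * ∑ i, X ω i ^ 2 := h1
    _ ≤ (∑ i, u i ^ 2) * 1 := by nlinarith
    _ = _ := mul_one _
  have hY1 : ∀ ω, |Y ω| = 1 := fun ω => by rcases hYsign ω with h | h <;> simp [h]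
  have hYsq : ∀ ω, Y ω ^ 2 = 1 := fun ω => by rcases hYsign ω with h | h <;> simp [h]
  -- measurability
  have hXi : ∀ i, Measurable fun ω => X ω i := fun i => (measurable_pi_apply i).comp hXmeas
  have hdm : ∀ u : Fin d → ℝ, Measurable fun ω => u ⬝ᵥ X ω := by
    intro u
    simp only [dotProduct]
    exact Finset.measurable_sum _ fun i _ => (hXi i).const_mul (u i)
  have intb : ∀ (f : Ω → ℝ) (C : ℝ), Measurable f → (∀ᵐ ω ∂P, |f ω| ≤ C) → Integrable f P := by
    intro f C hf hb
    exact Integrable.mono' (integrable_const C) hf.aestronglyMeasurable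
      (by simpa [Real.norm_eq_abs] using hb)
  have hXabs : ∀ᵐ ω ∂P, ∀ i, |X ω i| ≤ 1 := by
    filter_upwards [hX1] with ω hω i
    have h1 : X ω i ^ 2 ≤ 1 :=
      le_trans (Finset.single_le_sum (f := fun i => X ω i ^ 2)
        (fun i _ => sq_nonneg _) (Finset.mem_univ i)) hω
    nlinarith [abs_nonneg (X ω i), sq_abs (X ω i)]
  -- dot-product bound
  have habsC : ∀ (u : Fin d → ℝ) (C : ℝ), 0 ≤ C → (∑ i, u i ^ 2 ≤ C ^ 2) →
      ∀ᵐ ω ∂P, |u ⬝ᵥ X ω| ≤ C := by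
    intro u C hC hu
    filter_upwards [hX1] with ω hω
    have h1 := hCS u ω hω
    nlinarith [abs_nonneg (u ⬝ᵥ X ω), sq_abs (u ⬝ᵥ X ω)]
  -- μ dot products
  have hYXmeas : Measurable fun ω => Y ω • X ω :=
    measurable_pi_lambda _ fun i => hYmeas.mul (hXi i)
  have hYX_int : Integrable (fun ω => Y ω • X ω) P := by
    refine Integrable.mono' (integrable_const 1) hYXmeas.aestronglyMeasurable ?_
    filter_upwards [hXabs] with ω hω
    rw [pi_norm_le_iff_of_nonneg zero_le_one]
    intro i
    show |Y ω * X ω i| ≤ 1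
    rw [abs_mul, hY1 ω, one_mul]
    exact hω i
  have hYuX_int : ∀ (u : Fin d → ℝ) (C : ℝ), 0 ≤ C → (∑ i, u i ^ 2 ≤ C ^ 2) →
      Integrable (fun ω => Y ω * (u ⬝ᵥ X ω)) P := by
    intro u C hC hu
    refine intb _ C (hYmeas.mul (hdm u)) ?_
    filter_upwards [habsC u C hC hu] with ω hω
    rw [abs_mul, hY1 ω, one_mul]
    exact hω
  have hμdot : ∀ u : Fin d → ℝ, u ⬝ᵥ μv = ∫ ω, Y ω * (u ⬝ᵥ X ω) ∂P := by
    intro u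
    rw [hμv, dot_integral P u _ hYX_int]
    refine integral_congr_ae (Filter.Eventually.of_forall fun ω => ?_)
    show u ⬝ᵥ (Y ω • X ω) = Y ω * (u ⬝ᵥ X ω)
    rw [dotProduct_smul, smul_eq_mul]
  -- expected hinge loss is linear on the ball
  have hloss : ∀ u : Fin d → ℝ, ∑ i, u i ^ 2 ≤ 1 →
      ∫ ω, max 0 (1 - Y ω * (u ⬝ᵥ X ω)) ∂P = 1 - u ⬝ᵥ μv := by
    intro u hu
    have h1 : ∫ ω, max 0 (1 - Y ω * (u ⬝ᵥ X ω)) ∂P = ∫ ω, 1 - Y ω * (u ⬝ᵥ X ω) ∂P := by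
      refine integral_congr_ae ?_
      filter_upwards [habsC u 1 zero_le_one (by simpa using hu)] with ω hω
      have h2 : Y ω * (u ⬝ᵥ X ω) ≤ 1 := by
        calc Y ω * (u ⬝ᵥ X ω) ≤ |Y ω * (u ⬝ᵥ X ω)| := le_abs_self _
        _ = |u ⬝ᵥ X ω| := by rw [abs_mul, hY1 ω, one_mul]
        _ ≤ 1 := hω
      exact max_eq_right (by linarith)
    rw [h1, integral_sub (integrable_const 1)
      (hYuX_int u 1 zero_le_one (by simpa using hu)), integral_const]
    simp [hμdot u]
  -- identification of ustar
  have hud : m ≤ ustar ⬝ᵥ μv := by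
    have hu0mem : (m⁻¹ • μv) ∈ U := by
      rw [hU]
      show Real.sqrt (∑ i, (m⁻¹ * μv i) ^ 2) ≤ 1
      have : ∑ i, (m⁻¹ * μv i) ^ 2 = m⁻¹ ^ 2 * ∑ i, μv i ^ 2 := by
        rw [Finset.mul_sum]; exact Finset.sum_congr rfl fun i _ => by ring
      rw [this, hm2]
      rw [show m⁻¹ ^ 2 * m ^ 2 = 1 by field_simp]
      simp
    have h1 := hmin (m⁻¹ • μv) hu0mem
    rw [hloss ustar hu1, hloss (m⁻¹ • μv) (hball _ hu0mem)] at h1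
    have h2 : (m⁻¹ • μv) ⬝ᵥ μv = m := by
      rw [smul_dotProduct, smul_eq_mul]
      have : μv ⬝ᵥ μv = ∑ i, μv i ^ 2 := by
        simp [dotProduct, sq]
      rw [this, hm2]
      field_simp
    rw [h2] at h1
    linarith
  have hq0 : ∀ i, m * ustar i = μv i := by
    have hqe : ∑ i, (m * ustar i - μv i) ^ 2
        = m ^ 2 * (∑ i, ustar i ^ 2) - 2 * m * (ustar ⬝ᵥ μv) + ∑ i, μv i ^ 2 := by
      simp only [dotProduct, Finset.mul_sum, ← Finset.sum_sub_distrib, ← Finset.sum_add_distrib]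
      exact Finset.sum_congr rfl fun i _ => by ring
    have hq : ∑ i, (m * ustar i - μv i) ^ 2 ≤ 0 := by
      rw [hqe, hm2]
      nlinarith [hud, hu1, hm0]
    have hq' : ∑ i, (m * ustar i - μv i) ^ 2 = 0 :=
      le_antisymm hq (Finset.sum_nonneg fun i _ => sq_nonneg _)
    intro i
    have h1 : (m * ustar i - μv i) ^ 2 = 0 :=
      (Finset.sum_eq_zero_iff_of_nonneg fun j _ => sq_nonneg _).1 hq' i (Finset.mem_univ i)
    have h2 : m * ustar i - μv i = 0 := by
      exact pow_eq_zero_iff (n := 2) (by norm_num) |>.1 h1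
    linarith
  have hμe : μv = m • ustar := funext fun i => ((hq0 i).symm : μv i = m * ustar i)
  have hunorm : ∑ i, ustar i ^ 2 = 1 := by
    have h1 : ∑ i, μv i ^ 2 = m ^ 2 * ∑ i, ustar i ^ 2 := by
      rw [Finset.mul_sum]
      exact Finset.sum_congr rfl fun i _ => by rw [← hq0 i]; ring
    have h2 : m ^ 2 * 1 = m ^ 2 * ∑ i, ustar i ^ 2 := by rw [mul_one, ← h1]; exact hm2.symm
    exact (mul_left_cancel₀ (by positivity) h2).symm
  -- properties of g
  have hgi : ∀ i, Measurable fun ω => g w ω i := by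
    intro i
    have he : (fun ω => g w ω i)
        = fun ω => if Y ω * (w ⬝ᵥ X ω) < 1 then -(Y ω) * X ω i else 0 := by
      funext ω; rw [hg]; split_ifs <;> simp
    rw [he]
    exact Measurable.ite (measurableSet_lt (hYmeas.mul (hdm w)) measurable_const)
      (hYmeas.neg.mul (hXi i)) measurable_const
  have hgabs : ∀ᵐ ω ∂P, ∀ i, |g w ω i| ≤ 1 := by
    filter_upwards [hXabs] with ω hω i
    rw [hg]
    split_ifs
    · show |(-(Y ω)) * X ω i| ≤ 1
      rw [abs_mul, abs_neg, hY1 ω, one_mul]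
      exact hω i
    · show |(0 : Fin d → ℝ) i| ≤ 1
      simp
  have hgmeas : Measurable (g w) := measurable_pi_lambda _ hgi
  have hgint : Integrable (g w) P := by
    refine Integrable.mono' (integrable_const 1) hgmeas.aestronglyMeasurable ?_
    filter_upwards [hgabs] with ω hω
    rw [pi_norm_le_iff_of_nonneg zero_le_one]
    exact fun i => hω i
  have hgij_int : ∀ i j : Fin d, Integrable (fun ω => g w ω i * g w ω j) P := by
    intro i j
    refine intb _ 1 ((hgi i).mul (hgi j)) ?_
    filter_upwards [hgabs] with ω hω
    rw [abs_mul]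
    exact mul_le_one₀ (hω i) (abs_nonneg _) (hω j)
  have hXij_int : ∀ i j : Fin d, Integrable (fun ω => X ω i * X ω j) P := by
    intro i j
    refine intb _ 1 ((hXi i).mul (hXi j)) ?_
    filter_upwards [hXabs] with ω hω
    rw [abs_mul]
    exact mul_le_one₀ (hω i) (abs_nonneg _) (hω j)
  -- the difference vector
  have hv4 : ∑ i, (w i - ustar i) ^ 2 ≤ 2 * (1 - w ⬝ᵥ ustar) := by
    have h1 : ∑ i, (w i - ustar i) ^ 2
        = (∑ i, w i ^ 2) - 2 * (w ⬝ᵥ ustar) + ∑ i, ustar i ^ 2 := by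
      simp only [dotProduct, Finset.mul_sum, ← Finset.sum_sub_distrib, ← Finset.sum_add_distrib]
      exact Finset.sum_congr rfl fun i _ => by ring
    rw [h1, hunorm]
    linarith
  have hwu_abs : |w ⬝ᵥ ustar| ≤ 1 := by
    have h1 := Finset.sum_mul_sq_le_sq_mul_sq Finset.univ w ustar
    have h2 : (w ⬝ᵥ ustar) ^ 2 ≤ 1 := by
      calc (w ⬝ᵥ ustar) ^ 2 = (∑ i, w i * ustar i) ^ 2 := rfl
      _ ≤ (∑ i, w i ^ 2) * ∑ i, ustar i ^ 2 := h1
      _ ≤ 1 := by nlinarith [Finset.sum_nonneg (fun i (_ : i ∈ Finset.univ) => sq_nonneg (ustar i))]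
    nlinarith [abs_nonneg (w ⬝ᵥ ustar), sq_abs (w ⬝ᵥ ustar)]
  have hvsum4 : ∑ i, (w i - ustar i) ^ 2 ≤ 2 ^ 2 := by
    have := hv4
    have := hwu_abs
    nlinarith [abs_nonneg (w ⬝ᵥ ustar), le_abs_self (-(w ⬝ᵥ ustar)), neg_le_abs (w ⬝ᵥ ustar)]
  have hvw_eq : ∀ x : Fin d → ℝ, ∑ i, (w - ustar) i ^ 2 = ∑ i, (w i - ustar i) ^ 2 := by
    intro _; rfl
  -- formula for the subgradient dot product
  have hGf : ∀ ω, (w - ustar) ⬝ᵥ g w ω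
      = if Y ω * (w ⬝ᵥ X ω) < 1 then -(Y ω) * ((w - ustar) ⬝ᵥ X ω) else 0 := by
    intro ω
    rw [hg]
    split_ifs
    · rw [dotProduct_smul, smul_eq_mul]
    · exact dotProduct_zero _
  have hvgmeas : Measurable fun ω => (w - ustar) ⬝ᵥ g w ω := by
    simp only [dotProduct]
    exact Finset.measurable_sum _ fun i _ => (hgi i).const_mul _
  have hvg_abs : ∀ᵐ ω ∂P, |(w - ustar) ⬝ᵥ g w ω| ≤ 2 := by
    filter_upwards [habsC (w - ustar) 2 (by norm_num) hvsum4] with ω hω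
    rw [hGf ω]
    split_ifs
    · rw [abs_mul, abs_neg, hY1 ω, one_mul]; exact hω
    · simp
  have hvg_int : Integrable (fun ω => (w - ustar) ⬝ᵥ g w ω) P := intb _ 2 hvgmeas hvg_abs
  have hvX_int : Integrable (fun ω => -(Y ω) * ((w - ustar) ⬝ᵥ X ω)) P := by
    refine intb _ 2 (hYmeas.neg.mul (hdm _)) ?_
    filter_upwards [habsC (w - ustar) 2 (by norm_num) hvsum4] with ω hω
    rw [abs_mul, abs_neg, hY1 ω, one_mul]; exact hω
  -- pointwise lower bound for the subgradient term
  have hpt : ∀ᵐ ω ∂P, -(Y ω) * ((w - ustar) ⬝ᵥ X ω) ≤ (w - ustar) ⬝ᵥ g w ω := by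
    filter_upwards [hX1] with ω hω
    rw [hGf ω]
    split_ifs with h
    · exact le_refl _
    · push_neg at h
      have hwd : (w ⬝ᵥ X ω) ^ 2 ≤ 1 := le_trans (hCS w ω hω) hw1
      have hud' : (ustar ⬝ᵥ X ω) ^ 2 ≤ 1 := le_trans (hCS ustar ω hω) hu1
      have habs2 : ∀ t : ℝ, t ^ 2 ≤ 1 → Y ω * t ≤ 1 := by
        intro t ht
        have h3 : |Y ω * t| ≤ 1 := by
          rw [abs_mul, hY1 ω, one_mul]
          nlinarith [sq_abs t, abs_nonneg t]
        exact le_trans (le_abs_self _) h3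
      have hYw : Y ω * (w ⬝ᵥ X ω) = 1 := le_antisymm (habs2 _ hwd) h
      have hYu : Y ω * (ustar ⬝ᵥ X ω) ≤ 1 := habs2 _ hud'
      have hsplit : (w - ustar) ⬝ᵥ X ω = w ⬝ᵥ X ω - ustar ⬝ᵥ X ω := sub_dotProduct _ _ _
      rw [hsplit]
      have hr : -(Y ω) * (w ⬝ᵥ X ω - ustar ⬝ᵥ X ω)
          = -(Y ω * (w ⬝ᵥ X ω)) + Y ω * (ustar ⬝ᵥ X ω) := by ring
      rw [hr, hYw]
      linarith
  -- lower bound on the expected subgradient term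
  have hlow : m * (1 - w ⬝ᵥ ustar) ≤ ∫ ω, (w - ustar) ⬝ᵥ g w ω ∂P := by
    have h1 : (ustar - w) ⬝ᵥ μv = ∫ ω, -(Y ω) * ((w - ustar) ⬝ᵥ X ω) ∂P := by
      rw [hμdot (ustar - w)]
      refine integral_congr_ae (Filter.Eventually.of_forall fun ω => ?_)
      show Y ω * ((ustar - w) ⬝ᵥ X ω) = -(Y ω) * ((w - ustar) ⬝ᵥ X ω)
      rw [sub_dotProduct, sub_dotProduct]
      ring
    have h2 : (ustar - w) ⬝ᵥ μv = m * (1 - w ⬝ᵥ ustar) := by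
      have e1 : (ustar - w) ⬝ᵥ μv = ∑ i, (ustar i - w i) * (m * ustar i) := by
        refine Finset.sum_congr rfl fun i _ => ?_
        show (ustar i - w i) * μv i = _
        rw [← hq0 i]
      have e2 : ∑ i, (ustar i - w i) * (m * ustar i)
          = m * ((∑ i, ustar i ^ 2) - ∑ i, w i * ustar i) := by
        rw [mul_sub, Finset.mul_sum, Finset.mul_sum, ← Finset.sum_sub_distrib]
        exact Finset.sum_congr rfl fun i _ => by ring
      rw [e1, e2, hunorm]
      rfl

    calc m * (1 - w ⬝ᵥ ustar) = ∫ ω, -(Y ω) * ((w - ustar) ⬝ᵥ X ω) ∂P := by rw [← h1, h2]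
    _ ≤ ∫ ω, (w - ustar) ⬝ᵥ g w ω ∂P := integral_mono_ae hvX_int hvg_int hpt
  -- Hermitian-ness and nonnegativity of lmax
  have hAH : A.IsHermitian := by
    rw [hA]
    show _ = _
    ext i j
    simp only [Matrix.conjTranspose_apply, Matrix.of_apply, star_trivial]
    exact integral_congr_ae (Filter.Eventually.of_forall fun ω => mul_comm _ _)
  have hlmax0 : 0 ≤ lmax := by
    obtain ⟨v0, hv0ne, hv0eig⟩ := hlmax.1
    have h1 : v0 ⬝ᵥ A.mulVec v0 = ∫ ω, (v0 ⬝ᵥ X ω) ^ 2 ∂P := by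
      rw [hA]; exact quad_integral P v0 X hXij_int
    have h2 : (0:ℝ) ≤ ∫ ω, (v0 ⬝ᵥ X ω) ^ 2 ∂P :=
      integral_nonneg fun ω => sq_nonneg _
    have h3 : v0 ⬝ᵥ A.mulVec v0 = lmax * (v0 ⬝ᵥ v0) := by
      rw [hv0eig]
      calc v0 ⬝ᵥ (lmax • v0) = ∑ i, v0 i * (lmax * v0 i) := rfl
      _ = lmax * ∑ i, v0 i * v0 i := by
          rw [Finset.mul_sum]; exact Finset.sum_congr rfl fun i _ => by ring
      _ = lmax * (v0 ⬝ᵥ v0) := rfl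
    have h4 : 0 < v0 ⬝ᵥ v0 := by
      obtain ⟨i, hi⟩ := Function.ne_iff.1 hv0ne
      have hi' : v0 i ≠ 0 := by simpa using hi
      have h5 : (0:ℝ) < v0 i ^ 2 := by positivity
      have h6 : v0 ⬝ᵥ v0 = ∑ i, v0 i ^ 2 := by simp [dotProduct, sq]
      rw [h6]
      exact lt_of_lt_of_le h5 (Finset.single_le_sum (f := fun i => v0 i ^ 2)
        (fun i _ => sq_nonneg _) (Finset.mem_univ i))
    nlinarith [h1, h2, h3, h4]
  -- main chain
  have hquad : (w - ustar) ⬝ᵥ (Matrix.of fun i j => ∫ ω, g w ω i * g w ω j ∂P).mulVec (w - ustar)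
      = ∫ ω, ((w - ustar) ⬝ᵥ g w ω) ^ 2 ∂P := quad_integral P (w - ustar) (g w) hgij_int
  have hvg_sq_int : Integrable (fun ω => ((w - ustar) ⬝ᵥ g w ω) ^ 2) P := by
    refine intb _ 4 (hvgmeas.pow_const 2) ?_
    filter_upwards [hvg_abs] with ω hω
    rw [abs_pow]
    nlinarith [abs_nonneg ((w - ustar) ⬝ᵥ g w ω)]
  have hvX_sq_int : Integrable (fun ω => ((w - ustar) ⬝ᵥ X ω) ^ 2) P := by
    refine intb _ 4 ((hdm _).pow_const 2) ?_
    filter_upwards [habsC (w - ustar) 2 (by norm_num) hvsum4] with ω hω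
    rw [abs_pow]
    nlinarith [abs_nonneg ((w - ustar) ⬝ᵥ X ω)]
  have hsq : ∫ ω, ((w - ustar) ⬝ᵥ g w ω) ^ 2 ∂P ≤ ∫ ω, ((w - ustar) ⬝ᵥ X ω) ^ 2 ∂P := by
    refine integral_mono_ae hvg_sq_int hvX_sq_int ?_
    filter_upwards [] with ω
    rw [hGf ω]
    split_ifs
    · show (-(Y ω) * ((w - ustar) ⬝ᵥ X ω)) ^ 2 ≤ _
      have := hYsq ω
      nlinarith [sq_nonneg ((w - ustar) ⬝ᵥ X ω)]
    · show (0:ℝ) ^ 2 ≤ ((w - ustar) ⬝ᵥ X ω) ^ 2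
      simpa using sq_nonneg ((w - ustar) ⬝ᵥ X ω)
  have hAv : (w - ustar) ⬝ᵥ A.mulVec (w - ustar) = ∫ ω, ((w - ustar) ⬝ᵥ X ω) ^ 2 ∂P := by
    rw [hA]; exact quad_integral P (w - ustar) X hXij_int
  have hspec : (w - ustar) ⬝ᵥ A.mulVec (w - ustar) ≤ lmax * ∑ i, (w - ustar) i ^ 2 :=
    quadform_le_lmax A hAH lmax (fun l hl => hlmax.2 hl) (w - ustar)
  have hsum_eq : ∑ i, (w - ustar) i ^ 2 = ∑ i, (w i - ustar i) ^ 2 := by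
    simp [Pi.sub_apply]
  calc (w - ustar) ⬝ᵥ (Matrix.of fun i j => ∫ ω, g w ω i * g w ω j ∂P).mulVec (w - ustar)
      = ∫ ω, ((w - ustar) ⬝ᵥ g w ω) ^ 2 ∂P := hquad
    _ ≤ ∫ ω, ((w - ustar) ⬝ᵥ X ω) ^ 2 ∂P := hsq
    _ = (w - ustar) ⬝ᵥ A.mulVec (w - ustar) := hAv.symm
    _ ≤ lmax * ∑ i, (w - ustar) i ^ 2 := hspec
    _ ≤ lmax * (2 * (1 - w ⬝ᵥ ustar)) := by
        rw [hsum_eq]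
        exact mul_le_mul_of_nonneg_left hv4 hlmax0
    _ = (2 * lmax / m) * (m * (1 - w ⬝ᵥ ustar)) := by
        field_simp
    _ ≤ (2 * lmax / m) * ∫ ω, (w - ustar) ⬝ᵥ g w ω ∂P := by
        refine mul_le_mul_of_nonneg_left hlow ?_
        positivity
    _ = (2 * lmax / m) * ((w - ustar) ⬝ᵥ ∫ ω, g w ω ∂P) := by
        rw [dot_integral P (w - ustar) (g w) hgint]
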